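/- Let Ω ⊆ ℝ^d be bounded and open, let α, β, τ > 0 and γ ≥ 0, let c : ℝ → ℝ be measurable with 0 < c̲ ≤ c(x) ≤ c̄ for all x, and let d : ℝ → ℝ be twice differentiable with |d'(x)| ≤ K and |d''(x)| ≤ d̄ for all x. Let V be a linear subspace of the space of functions ℝ^d → ℝ all of whose elements are continuously differentiable on ℝ^d, and let R ∈ V. Suppose P, Q, S, S̃ ∈ V are such that for all v ∈ V: ∫_Ω [ (c(|∇R(x)|)/τ) S(x) v(x) + α ∇S(x)·∇v(x) + γ S(x) v(x) ] dx = ∫_Ω [ (c(|∇R(x)|)/τ) R(x) v(x) − β D(P(x), R(x)) v(x) + γ P(x) v(x) ] dx, and the same identity holds with (S̃, Q) in place of (S, P). Then (∫_Ω |S − S̃|² dx)^{1/2} ≤ ((β d̄ + γ)/(c̲/τ + γ)) (∫_Ω |P − Q|² dx)^{1/2}; in particular, if τ β d̄ < c̲ then the factor (β d̄ + γ)/(c̲/τ + γ) is strictly less than 1. -/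

import Mathlib

open MeasureTheory Set
open scoped RealInnerProductSpace

/-- The difference quotient `D(a,b) = (d(a) − d(b))/(a − b)` of a differentiable
function `d`, with `D(a,a) = d'(a)`. -/
noncomputable def diffQuot (d : ℝ → ℝ) (a b : ℝ) : ℝ :=
  if a = b then deriv d a else (d a - d b) / (a - b)

lemma diffQuot_rep {d : ℝ → ℝ} (hd : Differentiable ℝ d)
    (hcont : Continuous (deriv d)) (a c : ℝ) :
    diffQuot d a c = ∫ s in (0:ℝ)..1, deriv d (c + s * (a - c)) := by
  rcases eq_or_ne a c with rfl | hne
  · simp [diffQuot]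
  · have h1 : ∫ x in c..a, deriv d x = d a - d c :=
      intervalIntegral.integral_deriv_eq_sub (fun x _ => hd x)
        (hcont.intervalIntegrable _ _)
    have hder : ∀ s ∈ uIcc (0:ℝ) 1,
        HasDerivAt (fun s : ℝ => c + s * (a - c)) (a - c) s := fun s _ => by
      simpa using ((hasDerivAt_id s).mul_const (a - c)).const_add c
    have h2 := intervalIntegral.integral_comp_smul_deriv hder continuousOn_const hcont
    simp only [Function.comp, smul_eq_mul, zero_mul, add_zero, one_mul] at h2
    rw [add_sub_cancel] at h2
    have h3 : (a - c) * ∫ s in (0:ℝ)..1, deriv d (c + s * (a - c)) = d a - d c := by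
      rw [← h1, ← h2, ← intervalIntegral.integral_const_mul]
    have hac : a - c ≠ 0 := sub_ne_zero.mpr hne
    rw [diffQuot, if_neg hne]
    rw [← h3, mul_div_cancel_left₀ _ hac]

lemma diffQuot_abs_le {d : ℝ → ℝ} (hd : Differentiable ℝ d)
    (hcont : Continuous (deriv d)) {K : ℝ} (hK : ∀ x, |deriv d x| ≤ K) (a c : ℝ) :
    |diffQuot d a c| ≤ K := by
  rw [diffQuot_rep hd hcont a c]
  have := intervalIntegral.norm_integral_le_of_norm_le_const
    (C := K) (f := fun s : ℝ => deriv d (c + s * (a - c))) (a := 0) (b := 1)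
    (fun s _ => by simpa [Real.norm_eq_abs] using hK _)
  simpa [Real.norm_eq_abs] using this

lemma diffQuot_sub_le {d : ℝ → ℝ} (hd : Differentiable ℝ d)
    (hd' : Differentiable ℝ (deriv d)) {dbar : ℝ}
    (hbd : ∀ x, |deriv (deriv d) x| ≤ dbar) (a b c : ℝ) :
    |diffQuot d a c - diffQuot d b c| ≤ dbar * |a - b| := by
  have hcont : Continuous (deriv d) := hd'.continuous
  have hdbar0 : 0 ≤ dbar := le_trans (abs_nonneg _) (hbd 0)
  have hlip : ∀ x y : ℝ, |deriv d x - deriv d y| ≤ dbar * |x - y| := fun x y => by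
    have := Convex.norm_image_sub_le_of_norm_deriv_le (f := deriv d)
      (s := (univ : Set ℝ)) (fun z _ => hd' z)
      (fun z _ => by simpa [Real.norm_eq_abs] using hbd z)
      convex_univ (mem_univ y) (mem_univ x)
    simpa [Real.norm_eq_abs] using this
  rw [diffQuot_rep hd hcont a c, diffQuot_rep hd hcont b c]
  have hia : IntervalIntegrable (fun s : ℝ => deriv d (c + s * (a - c))) volume 0 1 :=
    (hcont.comp (by continuity)).intervalIntegrable _ _
  have hib : IntervalIntegrable (fun s : ℝ => deriv d (c + s * (b - c))) volume 0 1 :=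
    (hcont.comp (by continuity)).intervalIntegrable _ _
  rw [← intervalIntegral.integral_sub hia hib]
  have hb : ∀ s ∈ uIoc (0:ℝ) 1,
      ‖deriv d (c + s * (a - c)) - deriv d (c + s * (b - c))‖ ≤ dbar * |a - b| := by
    intro s hs
    rw [uIoc_of_le (by norm_num : (0:ℝ) ≤ 1)] at hs
    have hs0 : 0 < s := hs.1
    have hs1 : s ≤ 1 := hs.2
    have h1 := hlip (c + s * (a - c)) (c + s * (b - c))
    have he : (c + s * (a - c)) - (c + s * (b - c)) = s * (a - b) := by ring
    rw [he, abs_mul, abs_of_pos hs0] at h1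
    rw [Real.norm_eq_abs]
    calc |deriv d (c + s * (a - c)) - deriv d (c + s * (b - c))|
        ≤ dbar * (s * |a - b|) := h1
      _ ≤ dbar * (1 * |a - b|) := by
          apply mul_le_mul_of_nonneg_left _ hdbar0
          apply mul_le_mul_of_nonneg_right hs1 (abs_nonneg _)
      _ = dbar * |a - b| := by ring
  have := intervalIntegral.norm_integral_le_of_norm_le_const hb
  simpa [Real.norm_eq_abs] using this

set_option maxHeartbeats 2000000 in
/-- contraction estimate for the fixed-point iteration, Lemma 5.1:
one step of the linear fixed-point iteration (Problem 5.1) with stabilization parameter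
`γ`, applied to inputs `P` and `Q` with outputs `S` and `S̃`, contracts the `L²(Ω)`
distance by the factor `(β d̄ + γ)/(c̲/τ + γ)`, which is `< 1` whenever `τ β d̄ < c̲`. -/
theorem fixed_point_iteration_contraction
    {n : ℕ} (Ω : Set (EuclideanSpace ℝ (Fin n)))
    (hΩb : Bornology.IsBounded Ω) (hΩo : IsOpen Ω)
    (α β τ γ : ℝ) (hα : 0 < α) (hβ : 0 < β) (hτ : 0 < τ) (hγ : 0 ≤ γ)
    (c : ℝ → ℝ) (hcmeas : Measurable c)
    (cl cu : ℝ) (hcl : 0 < cl) (hcbound : ∀ x, cl ≤ c x ∧ c x ≤ cu)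
    (d : ℝ → ℝ) (hd : Differentiable ℝ d) (hd' : Differentiable ℝ (deriv d))
    (K dbar : ℝ) (hd'bdd : ∀ x : ℝ, |deriv d x| ≤ K)
    (hd''bdd : ∀ x : ℝ, |deriv (deriv d) x| ≤ dbar)
    (V : Submodule ℝ (EuclideanSpace ℝ (Fin n) → ℝ))
    (hVsmooth : ∀ f ∈ V, ContDiff ℝ 1 f)
    (R : EuclideanSpace ℝ (Fin n) → ℝ) (hR : R ∈ V)
    (P Q S St : EuclideanSpace ℝ (Fin n) → ℝ)
    (hP : P ∈ V) (hQ : Q ∈ V) (hS : S ∈ V) (hSt : St ∈ V)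
    (hvarS : ∀ v ∈ V,
      ∫ x in Ω, (c ‖gradient R x‖ / τ * S x * v x
        + α * ⟪gradient S x, gradient v x⟫ + γ * S x * v x)
      = ∫ x in Ω, (c ‖gradient R x‖ / τ * R x * v x
        - β * diffQuot d (P x) (R x) * v x + γ * P x * v x))
    (hvarSt : ∀ v ∈ V,
      ∫ x in Ω, (c ‖gradient R x‖ / τ * St x * v x
        + α * ⟪gradient St x, gradient v x⟫ + γ * St x * v x)
      = ∫ x in Ω, (c ‖gradient R x‖ / τ * R x * v x
        - β * diffQuot d (Q x) (R x) * v x + γ * Q x * v x)) :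
    Real.sqrt (∫ x in Ω, |S x - St x| ^ 2)
      ≤ (β * dbar + γ) / (cl / τ + γ) * Real.sqrt (∫ x in Ω, |P x - Q x| ^ 2) ∧
    (τ * β * dbar < cl → (β * dbar + γ) / (cl / τ + γ) < 1) := by
  classical
  have hdbar0 : 0 ≤ dbar := le_trans (abs_nonneg _) (hd''bdd 0)
  have hK0 : 0 ≤ K := le_trans (abs_nonneg _) (hd'bdd 0)
  have hden : 0 < cl / τ + γ := add_pos_of_pos_of_nonneg (div_pos hcl hτ) hγ
  have hnum : 0 ≤ β * dbar + γ := add_nonneg (mul_nonneg hβ.le hdbar0) hγ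
  have part2 : τ * β * dbar < cl → (β * dbar + γ) / (cl / τ + γ) < 1 := by
    intro hlt
    rw [div_lt_one hden]
    have : β * dbar < cl / τ := by
      rw [lt_div_iff₀ hτ]; nlinarith
    linarith
  refine ⟨?_, part2⟩
  -- measure-theoretic setup
  have hΩm : MeasurableSet Ω := hΩo.measurableSet
  haveI : IsFiniteMeasure (volume.restrict Ω) :=
    ⟨by rw [Measure.restrict_apply_univ]; exact hΩb.measure_lt_top⟩
  have hclcomp : IsCompact (closure Ω) := hΩb.isCompact_closure
  have hbddC : ∀ f : EuclideanSpace ℝ (Fin n) → ℝ, Continuous f →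
      ∃ C, 0 ≤ C ∧ ∀ x ∈ Ω, |f x| ≤ C := by
    intro f hf
    obtain ⟨C, hC⟩ := hclcomp.exists_bound_of_continuousOn hf.continuousOn
    exact ⟨max C 0, le_max_right _ _, fun x hx =>
      le_trans (by simpa [Real.norm_eq_abs] using hC x (subset_closure hx)) (le_max_left _ _)⟩
  have hint : ∀ f : EuclideanSpace ℝ (Fin n) → ℝ,
      AEStronglyMeasurable f (volume.restrict Ω) →
      (∃ C, ∀ x ∈ Ω, |f x| ≤ C) → IntegrableOn f Ω := by
    rintro f hfm ⟨C, hC⟩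
    refine ⟨hfm, HasFiniteIntegral.of_bounded (C := C) ?_⟩
    rw [ae_restrict_iff' hΩm]
    exact Filter.Eventually.of_forall fun x hx => by
      simpa [Real.norm_eq_abs] using hC x hx
  have hintC : ∀ f : EuclideanSpace ℝ (Fin n) → ℝ, Continuous f → IntegrableOn f Ω :=
    fun f hf => hint f hf.aestronglyMeasurable ((hbddC f hf).imp fun C hC => hC.2)
  -- continuity facts
  have hcontV : ∀ f ∈ V, Continuous f := fun f hf => (hVsmooth f hf).continuous
  have hgradcont : ∀ f ∈ V, Continuous (gradient f) := by
    intro f hf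
    have h1 : Continuous (fderiv ℝ f) := (hVsmooth f hf).continuous_fderiv one_ne_zero
    exact ((InnerProductSpace.toDual ℝ (EuclideanSpace ℝ (Fin n))).symm.continuous).comp h1
  have hwV : (fun x => S x - St x) ∈ V := sub_mem hS hSt
  have hcS := hcontV S hS
  have hcSt := hcontV St hSt
  have hcP := hcontV P hP
  have hcQ := hcontV Q hQ
  have hcR := hcontV R hR
  have hcw : Continuous (fun x => S x - St x) := hcS.sub hcSt
  -- gradient of the difference
  have hgw : ∀ y, gradient (fun x => S x - St x) y = gradient S y - gradient St y := by
    intro y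
    have hdS : DifferentiableAt ℝ S y := ((hVsmooth S hS).differentiable one_ne_zero) y
    have hdSt : DifferentiableAt ℝ St y := ((hVsmooth St hSt).differentiable one_ne_zero) y
    show (InnerProductSpace.toDual ℝ (EuclideanSpace ℝ (Fin n))).symm
        (fderiv ℝ (fun x => S x - St x) y) = _
    rw [fderiv_fun_sub hdS hdSt, map_sub]
    rfl
  -- the weight function
  have hcgmeas : Measurable (fun x : EuclideanSpace ℝ (Fin n) => c ‖gradient R x‖ / τ) :=
    (hcmeas.comp (hgradcont R hR).norm.measurable).div_const τ
  have hcgl : ∀ x : EuclideanSpace ℝ (Fin n), cl / τ ≤ c ‖gradient R x‖ / τ := fun x =>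
    div_le_div_of_nonneg_right ((hcbound _).1) hτ.le
  have hcgu : ∀ x : EuclideanSpace ℝ (Fin n), c ‖gradient R x‖ / τ ≤ cu / τ := fun x =>
    div_le_div_of_nonneg_right ((hcbound _).2) hτ.le
  have hcg0 : ∀ x : EuclideanSpace ℝ (Fin n), 0 ≤ c ‖gradient R x‖ / τ := fun x =>
    le_trans (le_of_lt (div_pos hcl hτ)) (hcgl x)
  -- diffQuot compositions
  have hDQm : Measurable (fun p : ℝ × ℝ => diffQuot d p.1 p.2) := by
    unfold diffQuot
    exact Measurable.ite (measurableSet_eq_fun measurable_fst measurable_snd)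
      (hd'.continuous.measurable.comp measurable_fst)
      (((hd.continuous.comp continuous_fst).measurable.sub
        (hd.continuous.comp continuous_snd).measurable).div
        (measurable_fst.sub measurable_snd))
  have hDQP : Measurable (fun x => diffQuot d (P x) (R x)) :=
    hDQm.comp (hcP.measurable.prodMk hcR.measurable)
  have hDQQ : Measurable (fun x => diffQuot d (Q x) (R x)) :=
    hDQm.comp (hcQ.measurable.prodMk hcR.measurable)
  have hDQPb : ∀ x, |diffQuot d (P x) (R x)| ≤ K :=
    fun x => diffQuot_abs_le hd hd'.continuous hd'bdd _ _
  have hDQQb : ∀ x, |diffQuot d (Q x) (R x)| ≤ K :=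
    fun x => diffQuot_abs_le hd hd'.continuous hd'bdd _ _
  -- bounded-measurable times continuous is integrable
  have hintM : ∀ (f g : EuclideanSpace ℝ (Fin n) → ℝ), Measurable f →
      (∃ C, ∀ x, |f x| ≤ C) → Continuous g → IntegrableOn (fun x => f x * g x) Ω := by
    rintro f g hfm ⟨C, hC⟩ hg
    obtain ⟨Cg, hCg0, hCg⟩ := hbddC g hg
    refine hint _ ((hfm.mul hg.measurable).aestronglyMeasurable) ⟨C * Cg, fun x hx => ?_⟩
    rw [abs_mul]
    exact mul_le_mul (hC x) (hCg x hx) (abs_nonneg _) (le_trans (abs_nonneg _) (hC x))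
  have bcg : ∀ x : EuclideanSpace ℝ (Fin n), |c ‖gradient R x‖ / τ| ≤ cu / τ := fun x => by
    rw [abs_of_nonneg (hcg0 x)]; exact hcgu x
  have bcgg : ∀ x : EuclideanSpace ℝ (Fin n), |c ‖gradient R x‖ / τ + γ| ≤ cu / τ + γ := fun x => by
    rw [abs_of_nonneg (add_nonneg (hcg0 x) hγ)]; exact add_le_add_left (hcgu x) γ
  have bP : ∀ x : EuclideanSpace ℝ (Fin n), |β * diffQuot d (P x) (R x)| ≤ β * K := fun x => by
    rw [abs_mul, abs_of_pos hβ]; exact mul_le_mul_of_nonneg_left (hDQPb x) hβ.le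
  have bQ : ∀ x : EuclideanSpace ℝ (Fin n), |β * diffQuot d (Q x) (R x)| ≤ β * K := fun x => by
    rw [abs_mul, abs_of_pos hβ]; exact mul_le_mul_of_nonneg_left (hDQQb x) hβ.le
  have bN : ∀ x : EuclideanSpace ℝ (Fin n),
      |(-(β * (diffQuot d (P x) (R x) - diffQuot d (Q x) (R x))))| ≤ β * (K + K) := fun x => by
    rw [abs_neg, abs_mul, abs_of_pos hβ]
    exact mul_le_mul_of_nonneg_left
      ((abs_sub _ _).trans (add_le_add (hDQPb x) (hDQQb x))) hβ.le
  -- the variational identities applied to v = S - St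
  have h1 := hvarS _ hwV
  have h2 := hvarSt _ hwV
  -- integrability of the four integrands
  have hig1 : IntegrableOn (fun x => c ‖gradient R x‖ / τ * S x * (S x - St x)
      + α * ⟪gradient S x, gradient (fun x => S x - St x) x⟫
      + γ * S x * (S x - St x)) Ω := by
    have i1 := hintM _ (fun x => S x * (S x - St x)) hcgmeas
      ⟨cu / τ, bcg⟩ (hcS.mul hcw)
    have i2 : IntegrableOn (fun x => α * ⟪gradient S x, gradient (fun x => S x - St x) x⟫
        + γ * S x * (S x - St x)) Ω :=
      hintC _ ((continuous_const.mul ((hgradcont S hS).inner (hgradcont _ hwV))).add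
        ((continuous_const.mul hcS).mul hcw))
    exact IntegrableOn.congr_fun (i1.add i2) (fun x _ => by simp only [Pi.add_apply]; ring) hΩm
  have hig2 : IntegrableOn (fun x => c ‖gradient R x‖ / τ * St x * (S x - St x)
      + α * ⟪gradient St x, gradient (fun x => S x - St x) x⟫
      + γ * St x * (S x - St x)) Ω := by
    have i1 := hintM _ (fun x => St x * (S x - St x)) hcgmeas
      ⟨cu / τ, bcg⟩ (hcSt.mul hcw)
    have i2 : IntegrableOn (fun x => α * ⟪gradient St x, gradient (fun x => S x - St x) x⟫
        + γ * St x * (S x - St x)) Ω :=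
      hintC _ ((continuous_const.mul ((hgradcont St hSt).inner (hgradcont _ hwV))).add
        ((continuous_const.mul hcSt).mul hcw))
    exact IntegrableOn.congr_fun (i1.add i2) (fun x _ => by simp only [Pi.add_apply]; ring) hΩm
  have hir1 : IntegrableOn (fun x => c ‖gradient R x‖ / τ * R x * (S x - St x)
      - β * diffQuot d (P x) (R x) * (S x - St x) + γ * P x * (S x - St x)) Ω := by
    have i1 := hintM _ (fun x => R x * (S x - St x)) hcgmeas
      ⟨cu / τ, bcg⟩ (hcR.mul hcw)
    have i2 := hintM (fun x => β * diffQuot d (P x) (R x)) (fun x => S x - St x)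
      (measurable_const.mul hDQP)
      ⟨β * K, bP⟩ hcw
    have i3 : IntegrableOn (fun x => γ * P x * (S x - St x)) Ω :=
      hintC _ ((continuous_const.mul hcP).mul hcw)
    exact IntegrableOn.congr_fun ((i1.sub i2).add i3) (fun x _ => by simp only [Pi.add_apply, Pi.sub_apply]; ring) hΩm
  have hir2 : IntegrableOn (fun x => c ‖gradient R x‖ / τ * R x * (S x - St x)
      - β * diffQuot d (Q x) (R x) * (S x - St x) + γ * Q x * (S x - St x)) Ω := by
    have i1 := hintM _ (fun x => R x * (S x - St x)) hcgmeas
      ⟨cu / τ, bcg⟩ (hcR.mul hcw)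
    have i2 := hintM (fun x => β * diffQuot d (Q x) (R x)) (fun x => S x - St x)
      (measurable_const.mul hDQQ)
      ⟨β * K, bQ⟩ hcw
    have i3 : IntegrableOn (fun x => γ * Q x * (S x - St x)) Ω :=
      hintC _ ((continuous_const.mul hcQ).mul hcw)
    exact IntegrableOn.congr_fun ((i1.sub i2).add i3) (fun x _ => by simp only [Pi.add_apply, Pi.sub_apply]; ring) hΩm
  -- q and h
  have hiq : IntegrableOn (fun x => (c ‖gradient R x‖ / τ + γ) * (S x - St x) ^ 2
      + α * ‖gradient S x - gradient St x‖ ^ 2) Ω := by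
    have i1 := hintM (fun x => c ‖gradient R x‖ / τ + γ) (fun x => (S x - St x) ^ 2)
      (hcgmeas.add measurable_const)
      ⟨cu / τ + γ, bcgg⟩ (hcw.pow 2)
    have i2 : IntegrableOn (fun x => α * ‖gradient S x - gradient St x‖ ^ 2) Ω :=
      hintC _ (continuous_const.mul ((((hgradcont S hS).sub (hgradcont St hSt)).norm).pow 2))
    exact i1.add i2
  have hih : IntegrableOn (fun x =>
      -(β * (diffQuot d (P x) (R x) - diffQuot d (Q x) (R x))) * (S x - St x)
      + γ * ((P x - Q x) * (S x - St x))) Ω := by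
    have i1 := hintM (fun x => -(β * (diffQuot d (P x) (R x) - diffQuot d (Q x) (R x))))
      (fun x => S x - St x) ((measurable_const.mul (hDQP.sub hDQQ)).neg)
      ⟨β * (K + K), bN⟩ hcw
    have i2 : IntegrableOn (fun x => γ * ((P x - Q x) * (S x - St x))) Ω :=
      hintC _ (continuous_const.mul ((hcP.sub hcQ).mul hcw))
    exact i1.add i2
  -- key identity
  have e1 : ∫ x in Ω, ((c ‖gradient R x‖ / τ * S x * (S x - St x)
        + α * ⟪gradient S x, gradient (fun x => S x - St x) x⟫ + γ * S x * (S x - St x))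
      - (c ‖gradient R x‖ / τ * St x * (S x - St x)
        + α * ⟪gradient St x, gradient (fun x => S x - St x) x⟫ + γ * St x * (S x - St x)))
      = (∫ x in Ω, (c ‖gradient R x‖ / τ * S x * (S x - St x)
        + α * ⟪gradient S x, gradient (fun x => S x - St x) x⟫ + γ * S x * (S x - St x)))
      - ∫ x in Ω, (c ‖gradient R x‖ / τ * St x * (S x - St x)
        + α * ⟪gradient St x, gradient (fun x => S x - St x) x⟫ + γ * St x * (S x - St x)) :=
    integral_sub hig1 hig2
  have e2 : ∫ x in Ω, ((c ‖gradient R x‖ / τ * R x * (S x - St x)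
        - β * diffQuot d (P x) (R x) * (S x - St x) + γ * P x * (S x - St x))
      - (c ‖gradient R x‖ / τ * R x * (S x - St x)
        - β * diffQuot d (Q x) (R x) * (S x - St x) + γ * Q x * (S x - St x)))
      = (∫ x in Ω, (c ‖gradient R x‖ / τ * R x * (S x - St x)
        - β * diffQuot d (P x) (R x) * (S x - St x) + γ * P x * (S x - St x)))
      - ∫ x in Ω, (c ‖gradient R x‖ / τ * R x * (S x - St x)
        - β * diffQuot d (Q x) (R x) * (S x - St x) + γ * Q x * (S x - St x)) :=
    integral_sub hir1 hir2
  have hA : ∫ x in Ω, ((c ‖gradient R x‖ / τ * S x * (S x - St x)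
        + α * ⟪gradient S x, gradient (fun x => S x - St x) x⟫ + γ * S x * (S x - St x))
      - (c ‖gradient R x‖ / τ * St x * (S x - St x)
        + α * ⟪gradient St x, gradient (fun x => S x - St x) x⟫ + γ * St x * (S x - St x)))
      = ∫ x in Ω, ((c ‖gradient R x‖ / τ * R x * (S x - St x)
        - β * diffQuot d (P x) (R x) * (S x - St x) + γ * P x * (S x - St x))
      - (c ‖gradient R x‖ / τ * R x * (S x - St x)
        - β * diffQuot d (Q x) (R x) * (S x - St x) + γ * Q x * (S x - St x))) := by
    rw [e1, e2, h1, h2]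
  -- pointwise identification of both sides
  have hqg : ∀ x, ((c ‖gradient R x‖ / τ * S x * (S x - St x)
        + α * ⟪gradient S x, gradient (fun x => S x - St x) x⟫ + γ * S x * (S x - St x))
      - (c ‖gradient R x‖ / τ * St x * (S x - St x)
        + α * ⟪gradient St x, gradient (fun x => S x - St x) x⟫ + γ * St x * (S x - St x)))
      = (c ‖gradient R x‖ / τ + γ) * (S x - St x) ^ 2
        + α * ‖gradient S x - gradient St x‖ ^ 2 := by
    intro x
    rw [hgw x]
    have hi : ⟪gradient S x, gradient S x - gradient St x⟫
        - ⟪gradient St x, gradient S x - gradient St x⟫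
        = ‖gradient S x - gradient St x‖ ^ 2 := by
      rw [← inner_sub_left, real_inner_self_eq_norm_sq]
    linear_combination α * hi
  have hrh : ∀ x, ((c ‖gradient R x‖ / τ * R x * (S x - St x)
        - β * diffQuot d (P x) (R x) * (S x - St x) + γ * P x * (S x - St x))
      - (c ‖gradient R x‖ / τ * R x * (S x - St x)
        - β * diffQuot d (Q x) (R x) * (S x - St x) + γ * Q x * (S x - St x)))
      = -(β * (diffQuot d (P x) (R x) - diffQuot d (Q x) (R x))) * (S x - St x)
        + γ * ((P x - Q x) * (S x - St x)) := fun x => by ring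
  have hQH : ∫ x in Ω, ((c ‖gradient R x‖ / τ + γ) * (S x - St x) ^ 2
        + α * ‖gradient S x - gradient St x‖ ^ 2)
      = ∫ x in Ω, (-(β * (diffQuot d (P x) (R x) - diffQuot d (Q x) (R x))) * (S x - St x)
        + γ * ((P x - Q x) * (S x - St x))) := by
    rw [← funext hqg, ← funext hrh]
    exact hA
  -- step D: lower bound
  have hD : (cl / τ + γ) * ∫ x in Ω, |S x - St x| ^ 2
      ≤ ∫ x in Ω, ((c ‖gradient R x‖ / τ + γ) * (S x - St x) ^ 2
        + α * ‖gradient S x - gradient St x‖ ^ 2) := by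
    rw [← integral_const_mul]
    refine integral_mono (hintC _ (continuous_const.mul ((hcw.abs).pow 2))) hiq ?_
    intro x
    have h0 : |S x - St x| ^ 2 = (S x - St x) ^ 2 := sq_abs _
    dsimp only
    rw [h0]
    have : (cl / τ + γ) * (S x - St x) ^ 2 ≤ (c ‖gradient R x‖ / τ + γ) * (S x - St x) ^ 2 :=
      mul_le_mul_of_nonneg_right (by linarith [hcgl x]) (sq_nonneg _)
    have h2' : 0 ≤ α * ‖gradient S x - gradient St x‖ ^ 2 := by positivity
    linarith
  -- step E: upper bound
  have hE : ∫ x in Ω, (-(β * (diffQuot d (P x) (R x) - diffQuot d (Q x) (R x))) * (S x - St x)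
        + γ * ((P x - Q x) * (S x - St x)))
      ≤ (β * dbar + γ) * ∫ x in Ω, |P x - Q x| * |S x - St x| := by
    rw [← integral_const_mul]
    refine integral_mono hih (hintC _ (continuous_const.mul ((hcP.sub hcQ).abs.mul hcw.abs))) ?_
    intro x
    dsimp only
    have t0 : |diffQuot d (P x) (R x) - diffQuot d (Q x) (R x)| ≤ dbar * |P x - Q x| :=
      diffQuot_sub_le hd hd' hd''bdd _ _ _
    have e3 := abs_add_le (-(β * (diffQuot d (P x) (R x) - diffQuot d (Q x) (R x))) * (S x - St x))
      (γ * ((P x - Q x) * (S x - St x)))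
    have e4 := le_abs_self (-(β * (diffQuot d (P x) (R x) - diffQuot d (Q x) (R x))) * (S x - St x)
      + γ * ((P x - Q x) * (S x - St x)))
    have ea : |(-(β * (diffQuot d (P x) (R x) - diffQuot d (Q x) (R x)))) * (S x - St x)|
        = β * |diffQuot d (P x) (R x) - diffQuot d (Q x) (R x)| * |S x - St x| := by
      rw [abs_mul, abs_neg, abs_mul, abs_of_pos hβ]
    have eb : |γ * ((P x - Q x) * (S x - St x))| = γ * (|P x - Q x| * |S x - St x|) := by
      rw [abs_mul, abs_mul, abs_of_nonneg hγ]
    nlinarith [abs_nonneg (S x - St x), abs_nonneg (P x - Q x),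
      mul_le_mul_of_nonneg_right (mul_le_mul_of_nonneg_left t0 hβ.le) (abs_nonneg (S x - St x))]
  -- Hölder
  have hmem1 : MemLp (fun x => |P x - Q x|) (ENNReal.ofReal 2) (volume.restrict Ω) := by
    obtain ⟨C, hC0, hC⟩ := hbddC (fun x => |P x - Q x|) (hcP.sub hcQ).abs
    refine MemLp.of_bound (hcP.sub hcQ).abs.aestronglyMeasurable C ?_
    rw [ae_restrict_iff' hΩm]
    exact Filter.Eventually.of_forall fun x hx => by
      simpa [Real.norm_eq_abs, abs_abs] using hC x hx
  have hmem2 : MemLp (fun x => |S x - St x|) (ENNReal.ofReal 2) (volume.restrict Ω) := by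
    obtain ⟨C, hC0, hC⟩ := hbddC (fun x => |S x - St x|) hcw.abs
    refine MemLp.of_bound hcw.abs.aestronglyMeasurable C ?_
    rw [ae_restrict_iff' hΩm]
    exact Filter.Eventually.of_forall fun x hx => by
      simpa [Real.norm_eq_abs, abs_abs] using hC x hx
  have hconj : Real.HolderConjugate 2 2 := Real.HolderConjugate.two_two
  have hF := integral_mul_le_Lp_mul_Lq_of_nonneg hconj
    (Filter.Eventually.of_forall fun x => abs_nonneg (P x - Q x))
    (Filter.Eventually.of_forall fun x => abs_nonneg (S x - St x)) hmem1 hmem2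
  simp only [Real.rpow_two, ← Real.sqrt_eq_rpow, sq_abs] at hF
  -- hF : ∫ |P-Q|*|S-St| ≤ √(∫ (P-Q)^2) * √(∫ (S-St)^2)  (after simp, check form)
  have hIA0 : 0 ≤ ∫ x in Ω, |S x - St x| ^ 2 := integral_nonneg fun x => by positivity
  have hIB0 : 0 ≤ ∫ x in Ω, |P x - Q x| ^ 2 := integral_nonneg fun x => by positivity
  have hsqabs1 : (∫ x in Ω, (P x - Q x) ^ 2) = ∫ x in Ω, |P x - Q x| ^ 2 := by
    simp [sq_abs]
  have hsqabs2 : (∫ x in Ω, (S x - St x) ^ 2) = ∫ x in Ω, |S x - St x| ^ 2 := by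
    simp [sq_abs]
  rw [hsqabs1, hsqabs2] at hF
  have hchain : (cl / τ + γ) * ∫ x in Ω, |S x - St x| ^ 2
      ≤ (β * dbar + γ) * (Real.sqrt (∫ x in Ω, |P x - Q x| ^ 2)
        * Real.sqrt (∫ x in Ω, |S x - St x| ^ 2)) :=
    le_trans (le_trans hD (le_of_eq hQH)) (le_trans hE (mul_le_mul_of_nonneg_left hF hnum))
  set a := Real.sqrt (∫ x in Ω, |S x - St x| ^ 2) with hadef
  set b := Real.sqrt (∫ x in Ω, |P x - Q x| ^ 2) with hbdef
  have ha2 : a ^ 2 = ∫ x in Ω, |S x - St x| ^ 2 := Real.sq_sqrt hIA0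
  rw [← ha2] at hchain
  rcases eq_or_lt_of_le (show (0:ℝ) ≤ a from Real.sqrt_nonneg _) with h0 | hpos
  · rw [← h0]
    exact mul_nonneg (div_nonneg hnum hden.le) (Real.sqrt_nonneg _)
  · rw [div_mul_eq_mul_div, le_div_iff₀ hden]
    nlinarith [hchain, hpos, show (0:ℝ) ≤ b from Real.sqrt_nonneg _]
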